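/- Let K be a commutative ring, G a group, and C = KG the K-coalgebra with basis G in which every group element is group-like (Δ(g) = g ⊗ g, ε(g) = 1). Then the rational functor of C is exact: for every left C*-module M, the rational submodule is Rat(M) = Σ_{g∈G} e_g·M where e_g ∈ C* is the projection onto the coefficient of g, and Rat preserves surjections of C*-modules. -/
import Mathlib


/-!
Statement 17.  Let `K` be a commutative ring, `G` a group, and `C = KG` the
`K`-coalgebra with basis `G` in which every group element is group-like
(`Δ g = g ⊗ g`, `ε g = 1`).  Then the rational functor of `C` is exact: for every
left `C*`-module `M` the rational submodule is `Rat M = ∑_{g∈G} e_g·M`, where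
`e_g ∈ C*` is the projection onto the coefficient of `g`, and `Rat` preserves
surjections of `C*`-modules.
-/

universe u

open TensorProduct

variable (K : Type u) [CommRing K] (G : Type u) [Group G]

/-- The comultiplication of `KG`: every `g ∈ G` is group-like. -/
noncomputable def comulKG : (G →₀ K) →ₗ[K] ((G →₀ K) ⊗[K] (G →₀ K)) :=
  Finsupp.lsum K fun g =>
    LinearMap.toSpanSingleton K _ (Finsupp.single g (1 : K) ⊗ₜ[K] Finsupp.single g (1 : K))

/-- The counit of `KG`: `ε g = 1`. -/
noncomputable def counitKG : (G →₀ K) →ₗ[K] K :=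
  Finsupp.lsum K fun _ => LinearMap.id

/-- The convolution product on `C* = (KG)*`. -/
noncomputable def convKG (x y : Module.Dual K (G →₀ K)) : Module.Dual K (G →₀ K) :=
  (TensorProduct.lid K K).toLinearMap ∘ₗ (TensorProduct.map x y) ∘ₗ comulKG K G

/-- `e_g ∈ C*`, the projection onto the coefficient of `g`. -/
noncomputable def egKG (g : G) : Module.Dual K (G →₀ K) := Finsupp.lapply g

variable {K G}

set_option linter.unusedSectionVars false

lemma comul_single (g : G) (k : K) :
    comulKG K G (Finsupp.single g k) = k • (Finsupp.single g 1 ⊗ₜ[K] Finsupp.single g 1) := by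
  simp [comulKG]

lemma counit_apply (c : G →₀ K) : counitKG K G c = ∑ g ∈ c.support, c g := by
  simp [counitKG, Finsupp.lsum_apply, Finsupp.sum]

lemma eg_apply (g : G) (c : G →₀ K) : egKG K G g c = c g := rfl

lemma conv_single (x y : Module.Dual K (G →₀ K)) (g : G) (k : K) :
    convKG K G x y (Finsupp.single g k)
      = k * (x (Finsupp.single g 1) * y (Finsupp.single g 1)) := by
  simp [convKG, comul_single, smul_eq_mul, mul_assoc]

lemma conv_eg (x : Module.Dual K (G →₀ K)) (g : G) :
    convKG K G x (egKG K G g) = x (Finsupp.single g 1) • egKG K G g := by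
  apply Finsupp.lhom_ext
  intro h k
  rw [conv_single]
  simp only [LinearMap.smul_apply, eg_apply, Finsupp.single_apply, smul_eq_mul]
  by_cases hh : h = g <;> simp [hh, Finsupp.single_apply] <;> ring

/-- `m` is a rational element of a `C*`-module `(M, act)`. -/
def IsRationalKG {M : Type u} [AddCommGroup M] [Module K M]
    (act : Module.Dual K (G →₀ K) →ₗ[K] M →ₗ[K] M) (m : M) : Prop :=
  ∃ (n : ℕ) (c : Fin n → (G →₀ K)) (m' : Fin n → M),
    ∀ x : Module.Dual K (G →₀ K), act x m = ∑ i, x (c i) • m' i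

section ratlem
variable {M : Type u} [AddCommGroup M] [Module K M]
    (act : Module.Dual K (G →₀ K) →ₗ[K] M →ₗ[K] M)

lemma rat_zero : IsRationalKG act (0 : M) :=
  ⟨0, Fin.elim0, Fin.elim0, by simp⟩

lemma rat_add {m₁ m₂ : M} (h1 : IsRationalKG act m₁) (h2 : IsRationalKG act m₂) :
    IsRationalKG act (m₁ + m₂) := by
  obtain ⟨n1, c1, m1', h1⟩ := h1
  obtain ⟨n2, c2, m2', h2⟩ := h2
  refine ⟨n1 + n2, Fin.append c1 c2, Fin.append m1' m2', fun x => ?_⟩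
  rw [map_add, h1 x, h2 x, Fin.sum_univ_add]
  simp [Fin.append_left, Fin.append_right]

lemma rat_smul (k : K) {m : M} (h : IsRationalKG act m) : IsRationalKG act (k • m) := by
  obtain ⟨n, c, m', h⟩ := h
  refine ⟨n, c, fun i => k • m' i, fun x => ?_⟩
  rw [map_smul, h x, Finset.smul_sum]
  exact Finset.sum_congr rfl fun i _ => smul_comm k _ _

lemma rat_act_eg (hact_mul : ∀ x y, act (convKG K G x y) = (act x) ∘ₗ (act y))
    (g : G) (m : M) : IsRationalKG act (act (egKG K G g) m) := by
  refine ⟨1, fun _ => Finsupp.single g 1, fun _ => act (egKG K G g) m, fun x => ?_⟩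
  rw [Fin.sum_univ_one, ← LinearMap.comp_apply, ← hact_mul, conv_eg, map_smul,
    LinearMap.smul_apply]

lemma rat_mem_span (hact_mul : ∀ x y, act (convKG K G x y) = (act x) ∘ₗ (act y))
    (hact_one : act (counitKG K G) = LinearMap.id) (m : M) :
    IsRationalKG act m ↔
      m ∈ Submodule.span K {z : M | ∃ (g : G) (m' : M), z = act (egKG K G g) m'} := by
  classical
  constructor
  · rintro ⟨n, c, m', h⟩
    set S : Finset G := Finset.univ.biUnion fun i => (c i).support with hS
    have key : m = ∑ g ∈ S, act (egKG K G g) m := by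
      have h1 : ∀ g, act (egKG K G g) m = ∑ i, (c i) g • m' i := fun g => by
        rw [h (egKG K G g)]; rfl
      calc m = act (counitKG K G) m := by rw [hact_one]; rfl
        _ = ∑ i, counitKG K G (c i) • m' i := h _
        _ = ∑ i, (∑ g ∈ S, (c i) g) • m' i := by
            refine Finset.sum_congr rfl fun i _ => ?_
            rw [counit_apply]
            congr 1
            refine Finset.sum_subset (fun g hg => ?_) (fun g _ hg => ?_)
            · rw [hS]; exact Finset.mem_biUnion.2 ⟨i, Finset.mem_univ i, hg⟩
            · exact Finsupp.notMem_support_iff.1 hg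
        _ = ∑ g ∈ S, ∑ i, (c i) g • m' i := by
            rw [Finset.sum_comm]
            simp [Finset.sum_smul]
        _ = ∑ g ∈ S, act (egKG K G g) m := by
            exact Finset.sum_congr rfl fun g _ => (h1 g).symm
    rw [key]
    exact Submodule.sum_mem _ fun g _ => Submodule.subset_span ⟨g, m, rfl⟩
  · intro hm
    refine Submodule.span_induction ?_ (rat_zero act) (fun a b _ _ => rat_add act)
      (fun k a _ => rat_smul act k) hm
    rintro z ⟨g, m', rfl⟩
    exact rat_act_eg act hact_mul g m'

end ratlem

theorem stmt17
    {M : Type u} [AddCommGroup M] [Module K M]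
    (act : Module.Dual K (G →₀ K) →ₗ[K] M →ₗ[K] M)
    (hact_mul : ∀ x y, act (convKG K G x y) = (act x) ∘ₗ (act y))
    (hact_one : act (counitKG K G) = LinearMap.id)
    {N : Type u} [AddCommGroup N] [Module K N]
    (actN : Module.Dual K (G →₀ K) →ₗ[K] N →ₗ[K] N)
    (hactN_mul : ∀ x y, actN (convKG K G x y) = (actN x) ∘ₗ (actN y))
    (hactN_one : actN (counitKG K G) = LinearMap.id) :
    -- `Rat M = ∑_{g ∈ G} e_g · M` :
    (∀ m : M, IsRationalKG act m ↔
      m ∈ Submodule.span K {z : M | ∃ (g : G) (m' : M), z = act (egKG K G g) m'}) ∧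
    -- and `Rat` preserves surjections of `C*`-modules:
    (∀ f : M →ₗ[K] N, (∀ (x : Module.Dual K (G →₀ K)) (m : M), f (act x m) = actN x (f m)) →
      Function.Surjective f →
        ∀ n : N, IsRationalKG actN n → ∃ m : M, IsRationalKG act m ∧ f m = n) := by
  refine ⟨rat_mem_span act hact_mul hact_one, ?_⟩
  intro f hf hsurj n hn
  rw [rat_mem_span actN hactN_mul hactN_one] at hn
  refine Submodule.span_induction ?_ ⟨0, rat_zero act, map_zero f⟩
    (fun a b _ _ ⟨ma, hma, hfa⟩ ⟨mb, hmb, hfb⟩ =>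
      ⟨ma + mb, rat_add act hma hmb, by rw [map_add, hfa, hfb]⟩)
    (fun k a _ ⟨ma, hma, hfa⟩ => ⟨k • ma, rat_smul act k hma, by rw [map_smul, hfa]⟩) hn
  rintro z ⟨g, n', rfl⟩
  obtain ⟨m', hm'⟩ := hsurj n'
  exact ⟨act (egKG K G g) m', rat_act_eg act hact_mul g m', by rw [hf, hm']⟩
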